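/- Let W be a group with commuting involutions δ and ι on its lattice of normal subgroups, both intersection-preserving, modeling duality and enantiomorphism. Let M be a normal subgroup of finite index with W/M finite of order g. Suppose δ(M∩δ(M)) = M∩δ(M) and ι(M∩δ(M)) = M∩δ(M) (i.e., the mix with the dual is directly regular). Then M ∩ δ(M) = M ∩ ι(M) ∩ δ(M) ∩ δ(ι(M)), and writing A = M∩ι(M) and B = δ(M)∩δ(ι(M)) = δ(A), one has |W/(A·B)| = |W/A|²/|W/(A∩B)| ≥ |W/A|²/g². -/

import Mathlib

/-- Index product formula for a subgroup and a normal subgroup: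
`|W/(A⊔B)| * |W/(A⊓B)| = |W/A| * |W/B|`. -/
theorem aux_index_prod {W : Type*} [Group W] (A B : Subgroup W) [B.Normal] :
    (A ⊔ B).index * (A ⊓ B).index = A.index * B.index := by
  have h1 : (A ⊓ B).relIndex A * A.index = (A ⊓ B).index :=
    Subgroup.relIndex_mul_index inf_le_left
  have h2 : (A ⊓ B).relIndex A = B.relIndex A := Subgroup.inf_relIndex_left A B
  have h3 : B.relIndex (A ⊔ B) = B.relIndex A := Subgroup.relIndex_sup_right A B
  have h4 : B.relIndex (A ⊔ B) * (A ⊔ B).index = B.index :=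
    Subgroup.relIndex_mul_index le_sup_right
  calc (A ⊔ B).index * (A ⊓ B).index
      = (A ⊔ B).index * ((A ⊓ B).relIndex A * A.index) := by rw [h1]
    _ = (B.relIndex (A ⊔ B) * (A ⊔ B).index) * A.index := by rw [h2, ← h3]; ring
    _ = B.index * A.index := by rw [h4]
    _ = A.index * B.index := mul_comm _ _

/-- Let δ and ι be commuting, intersection-preserving involutions on
the normal subgroups of W (duality and enantiomorphism), with δ preserving the index
of normal subgroups.  Let M be normal with W/M finite of order g.  If M ∩ δ(M) is
invariant under both δ and ι (the mix with the dual is directly regular), then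
M ∩ δ(M) = M ∩ ι(M) ∩ δ(M) ∩ δ(ι(M)), and with A = M ∩ ι(M), B = δ(M) ∩ δ(ι(M)),
|W/(A·B)|·|W/(A∩B)| = |W/A|² and |W/(A·B)|·g² ≥ |W/A|². -/
theorem big_chirality_criterion
    {W : Type*} [Group W] (δ ι : Subgroup W → Subgroup W)
    (hδn : ∀ N : Subgroup W, N.Normal → (δ N).Normal)
    (hιn : ∀ N : Subgroup W, N.Normal → (ι N).Normal)
    (hδδ : ∀ N : Subgroup W, N.Normal → δ (δ N) = N)
    (hιι : ∀ N : Subgroup W, N.Normal → ι (ι N) = N)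
    (hcomm : ∀ N : Subgroup W, N.Normal → δ (ι N) = ι (δ N))
    (hδinf : ∀ N N' : Subgroup W, N.Normal → N'.Normal → δ (N ⊓ N') = δ N ⊓ δ N')
    (hιinf : ∀ N N' : Subgroup W, N.Normal → N'.Normal → ι (N ⊓ N') = ι N ⊓ ι N')
    (hδcard : ∀ N : Subgroup W, N.Normal → Nat.card (W ⧸ δ N) = Nat.card (W ⧸ N))
    (M : Subgroup W) (hM : M.Normal) [Finite (W ⧸ M)] [Finite (W ⧸ ι M)]
    (g : ℕ) (hg : g = Nat.card (W ⧸ M))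
    (hδfix : δ (M ⊓ δ M) = M ⊓ δ M) (hιfix : ι (M ⊓ δ M) = M ⊓ δ M) :
    M ⊓ δ M = M ⊓ ι M ⊓ δ M ⊓ δ (ι M) ∧
    (Nat.card (W ⧸ ((M ⊓ ι M) ⊔ (δ M ⊓ δ (ι M)))) *
        Nat.card (W ⧸ ((M ⊓ ι M) ⊓ (δ M ⊓ δ (ι M)))) =
      Nat.card (W ⧸ (M ⊓ ι M)) ^ 2) ∧
    (Nat.card (W ⧸ ((M ⊓ ι M) ⊔ (δ M ⊓ δ (ι M)))) * g ^ 2 ≥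
      Nat.card (W ⧸ (M ⊓ ι M)) ^ 2) := by
  have hδM : (δ M).Normal := hδn M hM
  have hιM : (ι M).Normal := hιn M hM
  have hδι : δ (ι M) = ι (δ M) := hcomm M hM
  -- Part 1
  have hi : ι M ⊓ ι (δ M) = M ⊓ δ M := by
    rw [← hιinf M (δ M) hM hδM, hιfix]
  have part1 : M ⊓ δ M = M ⊓ ι M ⊓ δ M ⊓ δ (ι M) := by
    apply le_antisymm
    · refine le_inf (le_inf (le_inf inf_le_left ?_) inf_le_right) ?_
      · exact hi.symm.le.trans inf_le_left
      · rw [hδι]; exact hi.symm.le.trans inf_le_right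
    · exact le_inf (inf_le_left.trans (inf_le_left.trans inf_le_left))
        (inf_le_left.trans inf_le_right)
  -- notation
  set A := M ⊓ ι M with hA
  set B := δ M ⊓ δ (ι M) with hB
  have hAn : A.Normal := Subgroup.normal_inf_normal M (ι M)
  have hBδA : B = δ A := (hδinf M (ι M) hM hιM).symm
  have hBn : B.Normal := hBδA ▸ hδn A hAn
  haveI := hBn
  -- index identities
  have hcards : ∀ H : Subgroup W, Nat.card (W ⧸ H) = H.index := fun H =>
    (Subgroup.index_eq_card H).symm
  have hAB_card : Nat.card (W ⧸ B) = Nat.card (W ⧸ A) := by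
    rw [hBδA]; exact hδcard A hAn
  have part2 : Nat.card (W ⧸ (A ⊔ B)) * Nat.card (W ⧸ (A ⊓ B)) =
      Nat.card (W ⧸ A) ^ 2 := by
    rw [hcards, hcards, hcards]
    rw [aux_index_prod A B, ← hcards A, ← hcards B, hAB_card, sq]
  refine ⟨part1, part2, ?_⟩
  -- Part 3
  have hABinf : A ⊓ B = M ⊓ δ M := by
    rw [hB, ← inf_assoc, ← part1]
  have hδMcard : Nat.card (W ⧸ δ M) = g := by rw [hδcard M hM, hg]
  have hineq : Nat.card (W ⧸ (A ⊓ B)) ≤ g ^ 2 := by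
    rw [hABinf, hcards]
    calc (M ⊓ δ M).index ≤ M.index * (δ M).index := Subgroup.index_inf_le
      _ = g * g := by rw [Subgroup.index_eq_card, Subgroup.index_eq_card, ← hg, hδMcard]
      _ = g ^ 2 := (sq g).symm
  calc Nat.card (W ⧸ (A ⊔ B)) * g ^ 2
      ≥ Nat.card (W ⧸ (A ⊔ B)) * Nat.card (W ⧸ (A ⊓ B)) :=
        Nat.mul_le_mul_left _ hineq
    _ = Nat.card (W ⧸ A) ^ 2 := part2
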